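/- arXiv:1401.2200 — 8 statements merged into one kernel-verified Lean document; each statement's English description precedes it below -/
import Mathlib

section
/- Let X ⊆ ℝⁿ and let g : ℝⁿ × Δ → ℝ be convex in its first argument for every fixed δ, where (Δ, F, P) is a probability space. Define the probability of violation of a point x as V(x) = P({δ : g(x,δ) > 0}) (assume measurability of each such set). If every point of X has probability of violation at most ε, then every point of the convex hull of X has probability of violation at most (n+1)ε. -/
open MeasureTheory

theorem stmt0 {n : ℕ} {Δ : Type*} [MeasurableSpace Δ] (μ : Measure Δ)
    [IsProbabilityMeasure μ]
    (g : EuclideanSpace ℝ (Fin n) → Δ → ℝ)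
    (hconv : ∀ δ, ConvexOn ℝ Set.univ (fun x => g x δ))
    (hmeas : ∀ x, MeasurableSet {δ | 0 < g x δ})
    (X : Set (EuclideanSpace ℝ (Fin n))) (ε : ℝ) (hε : ε ∈ Set.Ioo (0:ℝ) 1)
    (hX : ∀ x ∈ X, (μ {δ | 0 < g x δ}).toReal ≤ ε) :
    ∀ x ∈ convexHull ℝ X, (μ {δ | 0 < g x δ}).toReal ≤ (n + 1) * ε := by
  intro x hx
  rw [convexHull_eq_union] at hx
  simp only [Set.mem_iUnion] at hx
  obtain ⟨t, hts, hai, hxt⟩ := hx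
  -- card bound
  have hcard : t.card ≤ n + 1 := by
    have h1 := hai.card_le_finrank_succ
    rw [Fintype.card_coe] at h1
    have h2 : Module.finrank ℝ (vectorSpan ℝ (Set.range ((↑) : t → EuclideanSpace ℝ (Fin n))))
        ≤ n := by
      have := Submodule.finrank_le (vectorSpan ℝ (Set.range ((↑) : t → EuclideanSpace ℝ (Fin n))))
      simpa [finrank_euclideanSpace_fin] using this
    omega
  -- convex combination
  rw [Finset.convexHull_eq] at hxt
  obtain ⟨w, hw₀, hw₁, hcm⟩ := hxt
  -- inclusion of violation sets
  have hsub : {δ | 0 < g x δ} ⊆ ⋃ y ∈ t, {δ | 0 < g y δ} := by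
    intro δ hδ
    by_contra h
    simp only [Set.mem_iUnion, Set.mem_setOf_eq, not_exists, not_lt] at h
    have hle := (hconv δ).map_centerMass_le (t := t) (w := w)
      (p := id) hw₀ (hw₁ ▸ one_pos) (fun y _ => Set.mem_univ y)
    rw [hcm] at hle
    have : t.centerMass w (fun y => g y δ) ≤ 0 := by
      rw [Finset.centerMass, hw₁, inv_one, one_smul]
      exact Finset.sum_nonpos fun y hy =>
        smul_nonpos_of_nonneg_of_nonpos (hw₀ y hy) (h y hy)
    exact absurd (lt_of_lt_of_le hδ (hle.trans this)) (lt_irrefl 0)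
  -- measure estimate
  calc (μ {δ | 0 < g x δ}).toReal
      ≤ (μ (⋃ y ∈ t, {δ | 0 < g y δ})).toReal := by
        apply ENNReal.toReal_mono (measure_ne_top μ _) (measure_mono hsub)
    _ ≤ ∑ y ∈ t, (μ {δ | 0 < g y δ}).toReal := by
        rw [← ENNReal.toReal_sum (fun y _ => measure_ne_top μ _)]
        exact ENNReal.toReal_mono
          (ENNReal.sum_ne_top.2 fun y _ => measure_ne_top μ _)
          (measure_biUnion_finset_le t _)
    _ ≤ ∑ _y ∈ t, ε := Finset.sum_le_sum fun y hy => hX y (hts hy)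
    _ = t.card * ε := by rw [Finset.sum_const, nsmul_eq_mul]
    _ ≤ (n + 1) * ε := by
        apply mul_le_mul_of_nonneg_right _ hε.1.le
        exact_mod_cast hcard
end

section
/- If points x_1,…,x_M ∈ ℝⁿ each satisfy P({δ : g(x_k,δ) > 0}) ≤ ε/min{n+1, M}, where g(·,δ) is convex for each δ, then every point of conv({x_1,…,x_M}) satisfies P({δ : g(x,δ) > 0}) ≤ ε. -/
open MeasureTheory

theorem stmt4 {n M : ℕ} (hM : 0 < M) {Δ : Type*} [MeasurableSpace Δ] (μ : Measure Δ)
    [IsProbabilityMeasure μ]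
    (g : EuclideanSpace ℝ (Fin n) → Δ → ℝ)
    (hconv : ∀ δ, ConvexOn ℝ Set.univ (fun x => g x δ))
    (hmeas : ∀ y, MeasurableSet {δ | 0 < g y δ})
    (x : Fin M → EuclideanSpace ℝ (Fin n)) (ε : ℝ) (hε : ε ∈ Set.Ioo (0:ℝ) 1)
    (h : ∀ k, (μ {δ | 0 < g (x k) δ}).toReal ≤ ε / min ((n : ℝ) + 1) (M : ℝ)) :
    ∀ y ∈ convexHull ℝ (Set.range x), (μ {δ | 0 < g y δ}).toReal ≤ ε := by
  intro y hy
  rw [convexHull_eq_union] at hy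
  simp only [Set.mem_iUnion] at hy
  obtain ⟨t, hts, hai, hyt⟩ := hy
  -- cardinality bounds
  have hcard1 : t.card ≤ n + 1 := by
    have h1 := hai.card_le_finrank_succ
    have h2 : Module.finrank ℝ (vectorSpan ℝ (Set.range ((↑) : t → EuclideanSpace ℝ (Fin n))))
        ≤ n := by
      have := Submodule.finrank_le (vectorSpan ℝ (Set.range ((↑) : t → EuclideanSpace ℝ (Fin n))))
      simpa [finrank_euclideanSpace_fin] using this
    have := h1.trans (Nat.add_le_add_right h2 1)
    simpa [Fintype.card_coe] using this
  have hcard2 : t.card ≤ M := by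
    classical
    have hsub' : t ⊆ Finset.univ.image x := by
      intro z hz
      obtain ⟨k, hk⟩ := hts hz
      exact Finset.mem_image.2 ⟨k, Finset.mem_univ k, hk⟩
    calc t.card ≤ (Finset.univ.image x).card := Finset.card_le_card hsub'
      _ ≤ (Finset.univ : Finset (Fin M)).card := Finset.card_image_le
      _ = M := by simp
  -- set containment
  have hsub : {δ | 0 < g y δ} ⊆ ⋃ z ∈ t, {δ | 0 < g z δ} := by
    intro δ hδ
    by_contra hc
    simp only [Set.mem_iUnion, Set.mem_setOf_eq, not_exists, not_lt] at hc
    have hcs : Convex ℝ {x : EuclideanSpace ℝ (Fin n) | g x δ ≤ 0} := by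
      have := (hconv δ).convex_le 0
      simpa using this
    have : y ∈ {x : EuclideanSpace ℝ (Fin n) | g x δ ≤ 0} :=
      convexHull_min (fun z hz => hc z hz) hcs hyt
    exact absurd hδ (by simpa using not_lt.2 this)
  -- measure estimate
  have hmin : (0:ℝ) < min ((n : ℝ) + 1) (M : ℝ) := by
    apply lt_min
    · positivity
    · exact_mod_cast hM
  have hfin : ∀ z : EuclideanSpace ℝ (Fin n), μ {δ | 0 < g z δ} ≠ ⊤ := fun z =>
    measure_ne_top μ _
  have h1 : μ {δ | 0 < g y δ} ≤ ∑ z ∈ t, μ {δ | 0 < g z δ} :=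
    (measure_mono hsub).trans (measure_biUnion_finset_le t _)
  have hsumfin : (∑ z ∈ t, μ {δ | 0 < g z δ}) ≠ ⊤ :=
    ENNReal.sum_ne_top.2 fun z _ => hfin z
  have h2 : (μ {δ | 0 < g y δ}).toReal ≤ ∑ z ∈ t, (μ {δ | 0 < g z δ}).toReal := by
    calc (μ {δ | 0 < g y δ}).toReal ≤ (∑ z ∈ t, μ {δ | 0 < g z δ}).toReal :=
          ENNReal.toReal_mono hsumfin h1
      _ = ∑ z ∈ t, (μ {δ | 0 < g z δ}).toReal := ENNReal.toReal_sum fun z _ => hfin z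
  have h3 : ∑ z ∈ t, (μ {δ | 0 < g z δ}).toReal ≤ t.card * (ε / min ((n : ℝ) + 1) (M : ℝ)) := by
    have := Finset.sum_le_card_nsmul t (fun z => (μ {δ | 0 < g z δ}).toReal)
      (ε / min ((n : ℝ) + 1) (M : ℝ)) (fun z hz => by
        obtain ⟨k, hk⟩ := hts hz
        simpa [hk] using h k)
    simpa [nsmul_eq_mul] using this
  have h4 : (t.card : ℝ) * (ε / min ((n : ℝ) + 1) (M : ℝ)) ≤ ε := by
    have hcardle : (t.card : ℝ) ≤ min ((n : ℝ) + 1) (M : ℝ) := by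
      apply le_min
      · exact_mod_cast hcard1
      · exact_mod_cast hcard2
    have hdivpos : 0 ≤ ε / min ((n : ℝ) + 1) (M : ℝ) := div_nonneg hε.1.le hmin.le
    calc (t.card : ℝ) * (ε / min ((n : ℝ) + 1) (M : ℝ))
        ≤ min ((n : ℝ) + 1) (M : ℝ) * (ε / min ((n : ℝ) + 1) (M : ℝ)) := by
          apply mul_le_mul_of_nonneg_right hcardle
          exact hdivpos
      _ = ε := by
          rw [mul_comm, div_mul_cancel₀ _ (ne_of_gt hmin)]
  calc (μ {δ | 0 < g y δ}).toReal ≤ ∑ z ∈ t, (μ {δ | 0 < g z δ}).toReal := h2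
    _ ≤ t.card * (ε / min ((n : ℝ) + 1) (M : ℝ)) := h3
    _ ≤ ε := h4
end

section
/- For ε ∈ (0,1), β ∈ (0,1), ζ ≥ 1 an integer, and N a positive integer with N ≥ (e/(e−1))·(1/ε)·(ζ − 1 + ln(1/β)), it holds that Σ_{j=0}^{ζ−1} C(N,j) ε^j (1−ε)^{N−j} ≤ β. -/
theorem stmt5 (ε β : ℝ) (hε : ε ∈ Set.Ioo (0:ℝ) 1) (hβ : β ∈ Set.Ioo (0:ℝ) 1)
    (ζ N : ℕ) (hζ : 1 ≤ ζ) (hN : 0 < N)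
    (h : (N : ℝ) ≥ Real.exp 1 / (Real.exp 1 - 1) * (1 / ε) *
        ((ζ : ℝ) - 1 + Real.log (1 / β))) :
    ∑ j ∈ Finset.range ζ, (N.choose j : ℝ) * ε ^ j * (1 - ε) ^ (N - j) ≤ β := by
  obtain ⟨hε0, hε1⟩ := hε
  obtain ⟨hβ0, hβ1⟩ := hβ
  set e : ℝ := Real.exp 1 with he
  have he2 : (2:ℝ) ≤ e := by
    have := Real.add_one_le_exp (1:ℝ); linarith
  have he1 : (1:ℝ) < e := by linarith
  have he0 : (0:ℝ) < e := by linarith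
  set c : ℝ := ε * (1 - 1/e) with hc
  have hie : 0 < 1 - 1/e := by
    have : 1/e < 1 := by rw [div_lt_one he0]; linarith
    linarith
  have hc0 : 0 < c := mul_pos hε0 hie
  have hc1 : c < 1 := by
    have h1 : 1 - 1/e < 1 := by
      have : 0 < 1/e := by positivity
      linarith
    nlinarith
  have hεe0 : 0 ≤ ε / e := by positivity
  have h1ε : (0:ℝ) ≤ 1 - ε := by linarith
  -- Step 1: pull out e^(ζ-1)
  have step1 : ∑ j ∈ Finset.range ζ, (N.choose j : ℝ) * ε ^ j * (1 - ε) ^ (N - j)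
      ≤ e ^ (ζ - 1) * ∑ j ∈ Finset.range ζ, (N.choose j : ℝ) * (ε/e) ^ j * (1 - ε) ^ (N - j) := by
    rw [Finset.mul_sum]
    apply Finset.sum_le_sum
    intro j hj
    have hj' : j ≤ ζ - 1 := Nat.le_sub_one_of_lt (Finset.mem_range.mp hj)
    have hεj : ε ^ j = e ^ j * (ε/e) ^ j := by
      rw [← mul_pow]
      congr 1
      field_simp
    have hee : (e:ℝ) ^ j ≤ e ^ (ζ - 1) := pow_le_pow_right₀ he1.le hj'
    have hP : (0:ℝ) ≤ (N.choose j : ℝ) * (ε/e) ^ j * (1 - ε) ^ (N - j) := by positivity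
    calc (N.choose j : ℝ) * ε ^ j * (1 - ε) ^ (N - j)
        = e ^ j * ((N.choose j : ℝ) * (ε/e) ^ j * (1 - ε) ^ (N - j)) := by rw [hεj]; ring
      _ ≤ e ^ (ζ - 1) * ((N.choose j : ℝ) * (ε/e) ^ j * (1 - ε) ^ (N - j)) :=
          mul_le_mul_of_nonneg_right hee hP
  -- Step 2: bound partial binomial sum by (ε/e + (1-ε))^N
  have step2 : ∑ j ∈ Finset.range ζ, (N.choose j : ℝ) * (ε/e) ^ j * (1 - ε) ^ (N - j)
      ≤ (ε/e + (1 - ε)) ^ N := by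
    have hfull : (ε/e + (1 - ε)) ^ N
        = ∑ j ∈ Finset.range (N+1), (N.choose j : ℝ) * (ε/e) ^ j * (1 - ε) ^ (N - j) := by
      rw [add_pow]
      exact Finset.sum_congr rfl (fun j _ => by ring)
    rw [hfull]
    set M := max ζ (N+1) with hM
    have hζM : ζ ≤ M := le_max_left _ _
    have hNM : N + 1 ≤ M := le_max_right _ _
    have hle : ∑ j ∈ Finset.range ζ, (N.choose j : ℝ) * (ε/e) ^ j * (1 - ε) ^ (N - j)
        ≤ ∑ j ∈ Finset.range M, (N.choose j : ℝ) * (ε/e) ^ j * (1 - ε) ^ (N - j) := by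
      apply Finset.sum_le_sum_of_subset_of_nonneg (Finset.range_subset_range.mpr hζM)
      intro j _ _
      positivity
    have heq : ∑ j ∈ Finset.range (N+1), (N.choose j : ℝ) * (ε/e) ^ j * (1 - ε) ^ (N - j)
        = ∑ j ∈ Finset.range M, (N.choose j : ℝ) * (ε/e) ^ j * (1 - ε) ^ (N - j) := by
      apply Finset.sum_subset (Finset.range_subset_range.mpr hNM)
      intro j _ hj
      have : N < j := by
        simpa using Nat.lt_of_succ_le (le_of_not_gt (fun hlt => hj (Finset.mem_range.mpr hlt)))
      rw [Nat.choose_eq_zero_of_lt this]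
      simp
    rw [heq]
    exact hle
  -- Step 3
  have h1c : ε/e + (1 - ε) = 1 - c := by rw [hc]; ring
  have step3 : (ε/e + (1 - ε)) ^ N ≤ Real.exp (N * (-c)) := by
    rw [h1c, Real.exp_nat_mul]
    apply pow_le_pow_left₀ (by linarith)
    have := Real.add_one_le_exp (-c)
    linarith
  -- Combine
  have hcast : ((ζ - 1 : ℕ) : ℝ) = (ζ : ℝ) - 1 := by
    rw [Nat.cast_sub hζ]; simp
  have hcomb : e ^ (ζ - 1) * Real.exp (N * (-c)) = Real.exp ((ζ : ℝ) - 1 - c * N) := by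
    rw [he, ← Real.exp_nat_mul, ← Real.exp_add, hcast]
    ring_nf
  -- Step 4: exponent inequality
  have hlogβ : Real.log (1/β) = -Real.log β := by
    rw [one_div, Real.log_inv]
  have hA0 : 0 < (ζ : ℝ) - 1 + Real.log (1 / β) := by
    have h1 : (1:ℝ) ≤ (ζ:ℝ) := by exact_mod_cast hζ
    have h2 : 0 < Real.log (1/β) := Real.log_pos (by rw [one_div]; exact (one_lt_inv₀ hβ0).mpr hβ1)
    linarith
  have hkey : (ζ : ℝ) - 1 + Real.log (1 / β) ≤ c * N := by
    have hmul : c * (e / (e - 1) * (1 / ε) * ((ζ : ℝ) - 1 + Real.log (1 / β)))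
        = (ζ : ℝ) - 1 + Real.log (1 / β) := by
      have hne : e - 1 ≠ 0 := by linarith
      have hεne : ε ≠ 0 := ne_of_gt hε0
      have hene : e ≠ 0 := ne_of_gt he0
      rw [hc]
      field_simp
    have := mul_le_mul_of_nonneg_left h hc0.le
    rw [hmul] at this
    exact this
  have hfin : Real.exp ((ζ : ℝ) - 1 - c * N) ≤ β := by
    rw [← Real.exp_log hβ0]
    apply Real.exp_le_exp.mpr
    rw [hlogβ] at hkey
    linarith
  calc ∑ j ∈ Finset.range ζ, (N.choose j : ℝ) * ε ^ j * (1 - ε) ^ (N - j)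
      ≤ e ^ (ζ - 1) * ∑ j ∈ Finset.range ζ, (N.choose j : ℝ) * (ε/e) ^ j * (1 - ε) ^ (N - j) := step1
    _ ≤ e ^ (ζ - 1) * (ε/e + (1 - ε)) ^ N := by
        apply mul_le_mul_of_nonneg_left step2 (by positivity)
    _ ≤ e ^ (ζ - 1) * Real.exp (N * (-c)) := by
        apply mul_le_mul_of_nonneg_left step3 (by positivity)
    _ = Real.exp ((ζ : ℝ) - 1 - c * N) := hcomb
    _ ≤ β := hfin
end

section
/- Consider the feasibility set X_ε := {x ∈ X : P({δ : g(x,δ) ≤ 0}) ≥ 1−ε} of a chance-constrained program, where X ⊆ ℝⁿ and g(·,δ) is convex for each δ. Then conv(X_ε) ⊆ X_{(n+1)ε}, i.e., every point of the convex hull of X_ε satisfies P({δ : g(x,δ) ≤ 0}) ≥ 1−(n+1)ε. -/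
open MeasureTheory

theorem stmt8 {n : ℕ} {Δ : Type*} [MeasurableSpace Δ] (μ : Measure Δ)
    [IsProbabilityMeasure μ]
    (g : EuclideanSpace ℝ (Fin n) → Δ → ℝ)
    (hconv : ∀ δ, ConvexOn ℝ Set.univ (fun x => g x δ))
    (hmeas : ∀ x, MeasurableSet {δ | g x δ ≤ 0})
    (X : Set (EuclideanSpace ℝ (Fin n))) (hX : Convex ℝ X)
    (ε : ℝ) (hε : ε ∈ Set.Ioo (0:ℝ) 1) :
    convexHull ℝ {x ∈ X | 1 - ε ≤ (μ {δ | g x δ ≤ 0}).toReal}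
      ⊆ {x ∈ X | 1 - ((n : ℝ) + 1) * ε ≤ (μ {δ | g x δ ≤ 0}).toReal} := by
  intro x hx
  have hxX : x ∈ X := convexHull_min (fun y hy => hy.1) hX hx
  rw [convexHull_eq_union] at hx
  simp only [Set.mem_iUnion] at hx
  obtain ⟨t, hts, hcard, hxt⟩ := hx
  rw [Finset.convexHull_eq] at hxt
  obtain ⟨w, hw0, hw1, hwx⟩ := hxt
  set A : EuclideanSpace ℝ (Fin n) → Set Δ := fun y => {δ | g y δ ≤ 0} with hA
  set S : Set Δ := ⋂ y ∈ t, A y with hS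
  have hmeasS : MeasurableSet S :=
    MeasurableSet.biInter t.countable_toSet (fun y _ => hmeas y)
  -- S ⊆ {δ | g x δ ≤ 0}
  have hSsub : S ⊆ A x := by
    intro δ hδ
    have hle : g (t.centerMass w id) δ ≤ t.centerMass w ((fun z => g z δ) ∘ id) :=
      (hconv δ).map_centerMass_le hw0 (by rw [hw1]; norm_num)
        (fun i _ => Set.mem_univ _)
    rw [hwx] at hle
    have hcm : t.centerMass w ((fun z => g z δ) ∘ id) = ∑ y ∈ t, w y * g y δ := by
      simp [Finset.centerMass, hw1, smul_eq_mul]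
    have hnonpos : ∑ y ∈ t, w y * g y δ ≤ 0 := by
      apply Finset.sum_nonpos
      intro y hy
      have hgy : g y δ ≤ 0 := by
        have := Set.mem_iInter₂.mp hδ y hy
        exact this
      exact mul_nonpos_of_nonneg_of_nonpos (hw0 y hy) hgy
    exact le_trans hle (hcm ▸ hnonpos)
  -- union bound
  have hcompl : (μ Sᶜ).toReal ≤ ((n : ℝ) + 1) * ε := by
    have h1 : μ Sᶜ ≤ ∑ y ∈ t, μ (A y)ᶜ := by
      have : Sᶜ = ⋃ y ∈ t, (A y)ᶜ := by
        rw [hS]; simp [Set.compl_iInter]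
      rw [this]
      exact measure_biUnion_finset_le t _
    have hfin : ∀ y ∈ t, μ (A y)ᶜ ≠ ⊤ := fun y _ => measure_ne_top μ _
    have h2 : (μ Sᶜ).toReal ≤ ∑ y ∈ t, (μ (A y)ᶜ).toReal := by
      rw [← ENNReal.toReal_sum hfin]
      exact ENNReal.toReal_mono (by simp [ENNReal.sum_ne_top, hfin]) h1
    have h3 : ∀ y ∈ t, (μ (A y)ᶜ).toReal ≤ ε := by
      intro y hy
      have hy' := (hts hy).2
      have hc : μ (A y)ᶜ = 1 - μ (A y) := prob_compl_eq_one_sub (hmeas y)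
      rw [hc, ENNReal.toReal_sub_of_le prob_le_one ENNReal.one_ne_top]
      simp only [ENNReal.toReal_one]
      linarith
    have h4 : ∑ y ∈ t, (μ (A y)ᶜ).toReal ≤ t.card * ε := by
      calc ∑ y ∈ t, (μ (A y)ᶜ).toReal ≤ ∑ _y ∈ t, ε := Finset.sum_le_sum h3
        _ = t.card * ε := by simp [mul_comm]
    have h5 : (t.card : ℝ) ≤ (n : ℝ) + 1 := by
      have h6 := hcard.card_le_finrank_succ
      have h7 : Module.finrank ℝ (vectorSpan ℝ (Set.range ((↑) : t → EuclideanSpace ℝ (Fin n)))) ≤ n := by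
        simpa [finrank_euclideanSpace_fin] using
          (vectorSpan ℝ (Set.range ((↑) : t → EuclideanSpace ℝ (Fin n)))).finrank_le
      have : t.card ≤ n + 1 := by
        rw [← Fintype.card_coe]
        omega
      exact_mod_cast this
    have : (t.card : ℝ) * ε ≤ ((n : ℝ) + 1) * ε :=
      mul_le_mul_of_nonneg_right h5 hε.1.le
    linarith
  refine ⟨hxX, ?_⟩
  have hSr : (μ Sᶜ).toReal = 1 - (μ S).toReal := by
    rw [prob_compl_eq_one_sub hmeasS,
      ENNReal.toReal_sub_of_le prob_le_one ENNReal.one_ne_top]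
    simp
  have hmono : (μ S).toReal ≤ (μ (A x)).toReal :=
    ENNReal.toReal_mono (measure_ne_top μ _) (measure_mono hSsub)
  have : 1 - ((n : ℝ) + 1) * ε ≤ (μ S).toReal := by linarith
  exact le_trans this hmono
end

section
/- Consider the optimization problem min_{(x,y,z)∈ℝ³} z subject to z ≥ −√(x²+y²) and z ≥ cos(θ_i) x + sin(θ_i) y − 1 for θ_i = (i−1)·2π/N, i = 1,…,N, with N ≥ 5. Then the optimal value equals z*_N = x*_N − 1 where x*_N = (√(1+τ_N²) − 1)/τ_N², τ_N := sin(2π/N)/(1+cos(2π/N)), attained at the point (x*_N, τ_N x*_N, z*_N). -/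
set_option maxHeartbeats 1600000 in
theorem stmt11 (N : ℕ) (hN : 5 ≤ N) (τ xs zs : ℝ)
    (hτ : τ = Real.sin (2 * Real.pi / N) / (1 + Real.cos (2 * Real.pi / N)))
    (hxs : xs = (Real.sqrt (1 + τ ^ 2) - 1) / τ ^ 2)
    (hzs : zs = xs - 1) :
    IsLeast {z : ℝ | ∃ x y : ℝ,
        -Real.sqrt (x ^ 2 + y ^ 2) ≤ z ∧
        ∀ i ∈ Finset.range N,
          Real.cos ((i : ℝ) * (2 * Real.pi / N)) * x +
            Real.sin ((i : ℝ) * (2 * Real.pi / N)) * y - 1 ≤ z} zs ∧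
    (-Real.sqrt (xs ^ 2 + (τ * xs) ^ 2) ≤ zs ∧
      ∀ i ∈ Finset.range N,
        Real.cos ((i : ℝ) * (2 * Real.pi / N)) * xs +
          Real.sin ((i : ℝ) * (2 * Real.pi / N)) * (τ * xs) - 1 ≤ zs) := by
  have hNR : (5:ℝ) ≤ N := by exact_mod_cast hN
  have hNpos : (0:ℝ) < N := by linarith
  obtain ⟨a, ha⟩ : ∃ a : ℝ, a = Real.pi / N := ⟨_, rfl⟩
  have hapos : 0 < a := ha ▸ div_pos Real.pi_pos hNpos
  have halt : a < Real.pi / 2 := by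
    rw [ha, div_lt_div_iff₀ hNpos (by norm_num)]
    nlinarith [Real.pi_pos]
  have hapi : a ≤ Real.pi := by linarith [Real.pi_pos]
  obtain ⟨c, hcdef⟩ : ∃ c : ℝ, c = Real.cos a := ⟨_, rfl⟩
  obtain ⟨s, hsdef⟩ : ∃ s : ℝ, s = Real.sin a := ⟨_, rfl⟩
  have hc : 0 < c := hcdef ▸ Real.cos_pos_of_mem_Ioo ⟨by linarith, halt⟩
  have hs : 0 < s := hsdef ▸ Real.sin_pos_of_pos_of_lt_pi hapos (by linarith)
  have hsc : s ^ 2 + c ^ 2 = 1 := by rw [hcdef, hsdef]; exact Real.sin_sq_add_cos_sq a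
  have hc1 : c < 1 := by nlinarith
  have h1c : (0:ℝ) < 1 + c := by linarith
  have h2a : 2 * Real.pi / N = 2 * a := by rw [ha]; ring
  have hNa : (N:ℝ) * (2 * a) = 2 * Real.pi := by
    rw [ha]; field_simp
  -- τ = tan a = s / c
  have hτ' : τ = s / c := by
    rw [hτ, h2a, Real.sin_two_mul, Real.cos_two_mul, ← hcdef, ← hsdef]
    rw [show (1 : ℝ) + (2 * c ^ 2 - 1) = 2 * c ^ 2 by ring]
    field_simp
  have hτsq : τ ^ 2 = (1 - c ^ 2) / c ^ 2 := by
    rw [hτ', div_pow]; rw [show s ^ 2 = 1 - c ^ 2 by linarith]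
  have h1τ : 1 + τ ^ 2 = (1 / c) ^ 2 := by
    rw [hτsq]; field_simp; ring
  have hsqrt : Real.sqrt (1 + τ ^ 2) = 1 / c := by
    rw [h1τ, Real.sqrt_sq (by positivity)]
  have hxs' : xs = c / (1 + c) := by
    rw [hxs, hsqrt, hτsq]
    have hne1 : (1:ℝ) - c ^ 2 ≠ 0 := by nlinarith
    have hne2 : c ≠ 0 := ne_of_gt hc
    have hne3 : (1:ℝ) + c ≠ 0 := ne_of_gt h1c
    field_simp
    nlinarith [sq_nonneg c]
  have hzs' : zs = -(1 / (1 + c)) := by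
    rw [hzs, hxs']; field_simp; ring
  -- key cosine bound for feasibility
  have hfeas_cos : ∀ i ∈ Finset.range N,
      Real.cos ((i:ℝ) * (2 * a) - a) ≤ c := by
    intro i hi
    rcases Nat.eq_zero_or_pos i with h0 | h0
    · subst h0
      rw [hcdef]
      norm_num
    · have hi' : (i:ℝ) ≤ (N:ℝ) - 1 := by
        have : i ≤ N - 1 := Nat.le_sub_one_of_lt (Finset.mem_range.mp hi)
        have := (Nat.cast_le (α := ℝ)).mpr this
        push_cast [Nat.cast_sub (by omega : 1 ≤ N)] at this
        linarith
      have hi1 : (1:ℝ) ≤ (i:ℝ) := by exact_mod_cast h0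
      have h2a0 : (0:ℝ) ≤ 2 * a := by linarith
      have hm1 := mul_le_mul_of_nonneg_right hi1 h2a0
      have hm2 := mul_le_mul_of_nonneg_right hi' h2a0
      have hm2' : ((N:ℝ) - 1) * (2 * a) = 2 * Real.pi - 2 * a := by
        rw [← hNa]; ring
      rw [one_mul] at hm1
      rw [hm2'] at hm2
      have ht1 : a ≤ (i:ℝ) * (2 * a) - a := by linarith
      have ht2 : (i:ℝ) * (2 * a) - a ≤ 2 * Real.pi - 3 * a := by linarith
      rw [hcdef]
      by_cases htp : (i:ℝ) * (2 * a) - a ≤ Real.pi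
      · exact Real.cos_le_cos_of_nonneg_of_le_pi hapos.le htp ht1
      · rw [show (i:ℝ) * (2 * a) - a = 2 * Real.pi - (2 * Real.pi - ((i:ℝ) * (2 * a) - a)) by ring,
          Real.cos_two_pi_sub]
        exact Real.cos_le_cos_of_nonneg_of_le_pi hapos.le (by linarith) (by linarith)
  -- feasibility of the point (xs, τ * xs)
  have hplanes : ∀ i ∈ Finset.range N,
      Real.cos ((i : ℝ) * (2 * Real.pi / N)) * xs +
        Real.sin ((i : ℝ) * (2 * Real.pi / N)) * (τ * xs) - 1 ≤ zs := by
    intro i hi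
    rw [h2a, hτ']
    have key : Real.cos ((i:ℝ) * (2 * a)) * xs + Real.sin ((i:ℝ) * (2 * a)) * (s / c * xs)
        = (xs / c) * Real.cos ((i:ℝ) * (2 * a) - a) := by
      rw [Real.cos_sub, ← hcdef, ← hsdef]
      field_simp
    rw [key]
    have hxsc : xs / c = 1 / (1 + c) := by rw [hxs']; field_simp
    have hb := hfeas_cos i hi
    have hxspos : (0:ℝ) < 1 / (1 + c) := by positivity
    have hmul : (1 / (1 + c)) * Real.cos ((i:ℝ) * (2 * a) - a) ≤ (1 / (1 + c)) * c :=
      mul_le_mul_of_nonneg_left hb hxspos.le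
    have e1 : (1:ℝ) / (1 + c) * c = c / (1 + c) := by ring
    have e2 : c / (1 + c) - 1 = -(1 / (1 + c)) := by field_simp; ring
    rw [hxsc, hzs']
    linarith
  -- cone constraint at the point
  have hcone : -Real.sqrt (xs ^ 2 + (τ * xs) ^ 2) ≤ zs := by
    have hxs0 : 0 ≤ xs := by rw [hxs']; positivity
    have : xs ^ 2 + (τ * xs) ^ 2 = (xs / c) ^ 2 := by
      have h : xs ^ 2 + (τ * xs) ^ 2 = xs ^ 2 * (1 + τ ^ 2) := by ring
      rw [h, h1τ]; field_simp
    rw [this, Real.sqrt_sq (by positivity), hzs']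
    rw [show xs / c = 1 / (1 + c) from by rw [hxs']; field_simp]
  -- lower bound
  have hlb : ∀ z ∈ {z : ℝ | ∃ x y : ℝ,
        -Real.sqrt (x ^ 2 + y ^ 2) ≤ z ∧
        ∀ i ∈ Finset.range N,
          Real.cos ((i : ℝ) * (2 * Real.pi / N)) * x +
            Real.sin ((i : ℝ) * (2 * Real.pi / N)) * y - 1 ≤ z}, zs ≤ z := by
    rintro z ⟨x, y, hzc, hzp⟩
    set r : ℝ := Real.sqrt (x ^ 2 + y ^ 2) with hrdef
    have hr0 : 0 ≤ r := Real.sqrt_nonneg _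
    by_cases hr : r ≤ 1 / (1 + c)
    · rw [hzs']; linarith
    · push_neg at hr
      have hrpos : 0 < r := lt_trans (by positivity) hr
      -- set up complex argument
      set w : ℂ := ⟨x, y⟩ with hwdef
      have habs : ‖w‖ = r := by
        rw [Complex.norm_def, hwdef, Complex.normSq_mk, hrdef]
        ring_nf
      have hw0 : w ≠ 0 := by
        intro h
        rw [h] at habs
        simp at habs
        linarith [habs ▸ hrpos]
      set φ : ℝ := Complex.arg w with hφdef
      have hx : x = r * Real.cos φ := by
        have := Complex.norm_mul_cos_arg w
        rw [habs] at this
        simpa [hwdef] using this.symm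
      have hy : y = r * Real.sin φ := by
        have := Complex.norm_mul_sin_arg w
        rw [habs] at this
        simpa [hwdef] using this.symm
      -- choose index
      obtain ⟨k, hkdef⟩ : ∃ k : ℤ, k = round (φ / (2 * a)) := ⟨_, rfl⟩
      have h2apos : (0:ℝ) < 2 * a := by linarith
      have hka : |(k:ℝ) * (2 * a) - φ| ≤ a := by
        have h1 := abs_sub_round (φ / (2 * a))
        rw [← hkdef] at h1
        rw [abs_sub_comm]
        have e : φ - (k:ℝ) * (2 * a) = (φ / (2 * a) - (k:ℝ)) * (2 * a) := by
          field_simp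
        rw [e, abs_mul, abs_of_pos h2apos]
        calc |φ / (2 * a) - (k:ℝ)| * (2 * a) ≤ (1 / 2) * (2 * a) :=
              mul_le_mul_of_nonneg_right h1 h2apos.le
          _ = a := by ring
      have hNZ : (0:ℤ) < (N:ℤ) := by exact_mod_cast (by omega : 0 < N)
      obtain ⟨i, hidef⟩ : ∃ i : ℕ, i = (k % (N:ℤ)).toNat := ⟨_, rfl⟩
      have hmod0 : 0 ≤ k % (N:ℤ) := Int.emod_nonneg k (ne_of_gt hNZ)
      have hmodN : k % (N:ℤ) < (N:ℤ) := Int.emod_lt_of_pos k hNZ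
      have hiN : i < N := by
        omega
      have hicastZ : (i:ℤ) = k % (N:ℤ) := by
        rw [hidef]; exact Int.toNat_of_nonneg hmod0
      have hicast : (i:ℝ) = ((k % (N:ℤ) : ℤ) : ℝ) := by exact_mod_cast hicastZ
      -- cos(i * 2a - φ) = cos(k * 2a - φ)
      have hkey : Real.cos ((i:ℝ) * (2 * a) - φ) = Real.cos ((k:ℝ) * (2 * a) - φ) := by
        have hkid : (k:ℝ) = (i:ℝ) + ((k / (N:ℤ) : ℤ) : ℝ) * (N:ℝ) := by
          rw [hicast, Int.emod_def]
          push_cast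
          ring
        rw [hkid]
        rw [show ((i:ℝ) + ((k / (N:ℤ) : ℤ) : ℝ) * (N:ℝ)) * (2 * a) - φ
            = ((i:ℝ) * (2 * a) - φ) + ((k / (N:ℤ) : ℤ) : ℝ) * ((N:ℝ) * (2 * a)) by ring]
        rw [hNa, Real.cos_add_int_mul_two_pi]
      have hcge : c ≤ Real.cos ((i:ℝ) * (2 * a) - φ) := by
        rw [hkey, ← Real.cos_abs, hcdef]
        exact Real.cos_le_cos_of_nonneg_of_le_pi (abs_nonneg _) hapi hka
      -- apply constraint i
      have hpl := hzp i (Finset.mem_range.mpr hiN)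
      rw [h2a] at hpl
      have hlhs : Real.cos ((i:ℝ) * (2 * a)) * x + Real.sin ((i:ℝ) * (2 * a)) * y
          = r * Real.cos ((i:ℝ) * (2 * a) - φ) := by
        rw [hx, hy, Real.cos_sub]; ring
      rw [hlhs] at hpl
      have : r * c ≤ r * Real.cos ((i:ℝ) * (2 * a) - φ) :=
        mul_le_mul_of_nonneg_left hcge hr0
      have hrc : c / (1 + c) ≤ r * c := by
        have h := mul_le_mul_of_nonneg_right hr.le hc.le
        have e : 1 / (1 + c) * c = c / (1 + c) := by ring
        linarith [e ▸ h]
      have e2 : c / (1 + c) - 1 = -(1 / (1 + c)) := by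
        field_simp; ring
      rw [hzs']
      linarith
  refine ⟨⟨⟨xs, τ * xs, hcone, hplanes⟩, hlb⟩, hcone, hplanes⟩
end

section
/- In the counterexample SP_ex with N ≥ 5 samples θ_i = (i−1)·2π/N, removing the constraint with index i = 2 strictly decreases the optimal value: letting J*(θ) := (√(1+τ(θ)²) − 1)/τ(θ)² − 1 with τ(θ) = sin(θ)/(1+cos(θ)), one has J*(4π/N) < J*(2π/N). Hence every one of the N sampled constraints is a support constraint. -/
open Real

lemma half_tan (x : ℝ) (hc : Real.cos x ≠ 0) :
    Real.sin (2*x) / (1 + Real.cos (2*x)) = Real.tan x := by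
  rw [Real.sin_two_mul, Real.cos_two_mul, Real.tan_eq_sin_div_cos]
  have : 1 + (2 * Real.cos x ^ 2 - 1) = 2 * Real.cos x ^ 2 := by ring
  rw [this]
  field_simp

lemma f_mono {a b : ℝ} (hb : 0 < b) (hab : b < a) :
    (Real.sqrt (1 + a^2) - 1) / a^2 < (Real.sqrt (1 + b^2) - 1) / b^2 := by
  have ha : 0 < a := hb.trans hab
  have key : ∀ t : ℝ, 0 < t → (Real.sqrt (1 + t^2) - 1) / t^2 = 1 / (Real.sqrt (1 + t^2) + 1) := by
    intro t ht
    have h1 : (0:ℝ) ≤ 1 + t^2 := by positivity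
    have hs : Real.sqrt (1 + t^2) ^ 2 = 1 + t^2 := Real.sq_sqrt h1
    have hpos : 0 < Real.sqrt (1 + t^2) + 1 := by positivity
    rw [div_eq_div_iff (by positivity) (ne_of_gt hpos)]
    nlinarith [hs]
  rw [key a ha, key b hb]
  have h2 : Real.sqrt (1 + b^2) < Real.sqrt (1 + a^2) := by
    apply Real.sqrt_lt_sqrt (by positivity)
    nlinarith
  have : (0:ℝ) < Real.sqrt (1 + b^2) + 1 := by positivity
  apply one_div_lt_one_div_of_lt this (by linarith)

theorem stmt12 (N : ℕ) (hN : 5 ≤ N) :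
    (Real.sqrt (1 + (Real.sin (4 * Real.pi / N) / (1 + Real.cos (4 * Real.pi / N))) ^ 2) - 1) /
        (Real.sin (4 * Real.pi / N) / (1 + Real.cos (4 * Real.pi / N))) ^ 2 - 1
      < (Real.sqrt (1 + (Real.sin (2 * Real.pi / N) / (1 + Real.cos (2 * Real.pi / N))) ^ 2) - 1) /
          (Real.sin (2 * Real.pi / N) / (1 + Real.cos (2 * Real.pi / N))) ^ 2 - 1 := by
  have hN5 : (5:ℝ) ≤ N := by exact_mod_cast hN
  have hNpos : (0:ℝ) < N := by linarith
  have hpi := Real.pi_pos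
  -- angles
  have h1 : 0 < Real.pi / N := by positivity
  have h2 : 2 * Real.pi / N < Real.pi / 2 := by
    rw [div_lt_div_iff₀ hNpos (by norm_num)]
    nlinarith
  have h12 : Real.pi / N < 2 * Real.pi / N := by
    rw [div_lt_div_iff₀ hNpos hNpos]
    nlinarith
  have hcos1 : Real.cos (Real.pi / N) ≠ 0 :=
    ne_of_gt (Real.cos_pos_of_mem_Ioo ⟨by linarith, by linarith⟩)
  have hcos2 : Real.cos (2 * Real.pi / N) ≠ 0 :=
    ne_of_gt (Real.cos_pos_of_mem_Ioo ⟨by linarith, h2⟩)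
  have e1 : (4 : ℝ) * Real.pi / N = 2 * (2 * Real.pi / N) := by ring
  have e2 : (2 : ℝ) * Real.pi / N = 2 * (Real.pi / N) := by ring
  rw [e1, half_tan _ hcos2, e2, half_tan _ hcos1]
  have htanb : 0 < Real.tan (Real.pi / N) := Real.tan_pos_of_pos_of_lt_pi_div_two h1 (by linarith)
  have htab : Real.tan (Real.pi / N) < Real.tan (2 * Real.pi / N) :=
    Real.tan_lt_tan_of_nonneg_of_lt_pi_div_two (le_of_lt h1) h2 h12
  rw [e2] at htab
  linarith [f_mono htanb htab]
end

section
/- The map θ ↦ x*(θ) := (√(1+τ(θ)²) − 1)/τ(θ)² with τ(θ) := sin(θ)/(1+cos(θ)) = tan(θ/2) is strictly decreasing on (0, π/2). -/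
lemma aux_eq (t : ℝ) (ht : 0 < t) :
    (Real.sqrt (1 + t ^ 2) - 1) / t ^ 2 = 1 / (Real.sqrt (1 + t ^ 2) + 1) := by
  have h1 : (0:ℝ) ≤ 1 + t ^ 2 := by positivity
  have hs : Real.sqrt (1 + t ^ 2) ^ 2 = 1 + t ^ 2 := Real.sq_sqrt h1
  have hpos : 0 < Real.sqrt (1 + t ^ 2) + 1 := by positivity
  field_simp
  nlinarith [hs]

theorem stmt13 :
    StrictAntiOn
      (fun θ : ℝ =>
        (Real.sqrt (1 + (Real.sin θ / (1 + Real.cos θ)) ^ 2) - 1) /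
          (Real.sin θ / (1 + Real.cos θ)) ^ 2)
      (Set.Ioo 0 (Real.pi / 2)) := by
  intro a ha b hb hab
  obtain ⟨ha0, ha2⟩ := ha
  obtain ⟨hb0, hb2⟩ := hb
  have hpi := Real.pi_pos
  -- basic bounds
  have hca : 0 < Real.cos a := Real.cos_pos_of_mem_Ioo ⟨by linarith, ha2⟩
  have hcb : 0 < Real.cos b := Real.cos_pos_of_mem_Ioo ⟨by linarith, hb2⟩
  have hsa : 0 < Real.sin a := Real.sin_pos_of_pos_of_lt_pi ha0 (by linarith)
  have hsb : 0 < Real.sin b := Real.sin_pos_of_pos_of_lt_pi hb0 (by linarith)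
  have hsab : Real.sin a < Real.sin b := by
    apply Real.strictMonoOn_sin ⟨by linarith, by linarith⟩ ⟨by linarith, by linarith⟩ hab
  have hcab : Real.cos b < Real.cos a := by
    apply Real.strictAntiOn_cos ⟨by linarith, by linarith⟩ ⟨by linarith, by linarith⟩ hab
  set ta := Real.sin a / (1 + Real.cos a) with hta
  set tb := Real.sin b / (1 + Real.cos b) with htb
  have hta0 : 0 < ta := div_pos hsa (by linarith)
  have htb0 : 0 < tb := div_pos hsb (by linarith)
  have htab : ta < tb := by
    rw [hta, htb, div_lt_div_iff₀ (by linarith) (by linarith)]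
    nlinarith
  have hsq : ta ^ 2 < tb ^ 2 := by nlinarith
  have hroot : Real.sqrt (1 + ta ^ 2) < Real.sqrt (1 + tb ^ 2) :=
    Real.sqrt_lt_sqrt (by positivity) (by linarith)
  have hra : 0 < Real.sqrt (1 + ta ^ 2) + 1 := by positivity
  beta_reduce
  rw [← hta, ← htb]
  simp only [aux_eq ta hta0, aux_eq tb htb0]
  rw [div_lt_div_iff₀ (by positivity) hra]
  linarith
end

section
/- For ε, β ∈ (0,1), integers ζ ≥ 1, M ≥ 1, n ≥ 1, if N ≥ (e/(e−1))·(min{n+1,M}/ε)·(ζ − 1 + ln(M/β)), then M · Φ(ε/min{n+1,M}, ζ, N) ≤ β, where Φ(η,ζ,N) = Σ_{j=0}^{ζ−1} C(N,j) η^j (1−η)^{N−j}. -/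
theorem stmt14 (ε β : ℝ) (hε : ε ∈ Set.Ioo (0:ℝ) 1) (hβ : β ∈ Set.Ioo (0:ℝ) 1)
    (ζ M n N : ℕ) (hζ : 1 ≤ ζ) (hM : 1 ≤ M) (hn : 1 ≤ n)
    (h : (N : ℝ) ≥ Real.exp 1 / (Real.exp 1 - 1) *
        (min ((n : ℝ) + 1) (M : ℝ) / ε) * ((ζ : ℝ) - 1 + Real.log ((M : ℝ) / β))) :
    (M : ℝ) * ∑ j ∈ Finset.range ζ,
        (N.choose j : ℝ) * (ε / min ((n : ℝ) + 1) (M : ℝ)) ^ j *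
          (1 - ε / min ((n : ℝ) + 1) (M : ℝ)) ^ (N - j) ≤ β := by
  obtain ⟨hε0, hε1⟩ := hε
  obtain ⟨hβ0, hβ1⟩ := hβ
  have hM0 : (0:ℝ) < M := by exact_mod_cast hM
  set e : ℝ := Real.exp 1 with he
  have he1 : (1:ℝ) < e := by
    have := Real.exp_one_gt_d9; rw [he]; linarith
  have he0 : (0:ℝ) < e := by linarith
  set t : ℝ := min ((n : ℝ) + 1) (M : ℝ) with ht
  have ht1 : (1:ℝ) ≤ t := le_min (by linarith [Nat.cast_nonneg (α := ℝ) n]) (by exact_mod_cast hM)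
  have ht0 : (0:ℝ) < t := by linarith
  set η : ℝ := ε / t with hη
  have hη0 : 0 < η := div_pos hε0 ht0
  have hη1 : η < 1 := lt_of_le_of_lt (div_le_self hε0.le ht1) hε1
  set c : ℝ := 1 - 1 / e with hc
  have hc0 : 0 < c := by
    rw [hc]; have : 1 / e < 1 := by rw [div_lt_one he0]; exact he1
    linarith
  have hc1 : c < 1 := by
    rw [hc]; have : 0 < 1 / e := by positivity
    linarith
  set f : ℕ → ℝ := fun j => (N.choose j : ℝ) * (η / e) ^ j * (1 - η) ^ (N - j) with hf
  have hfnn : ∀ j, 0 ≤ f j := by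
    intro j
    have : (0:ℝ) ≤ 1 - η := by linarith
    positivity
  -- Step 1
  have step1 : ∑ j ∈ Finset.range ζ,
      (N.choose j : ℝ) * η ^ j * (1 - η) ^ (N - j)
      ≤ e ^ (ζ - 1) * ∑ j ∈ Finset.range ζ, f j := by
    rw [Finset.mul_sum]
    apply Finset.sum_le_sum
    intro j hj
    have hjζ : j ≤ ζ - 1 := by
      have := Finset.mem_range.mp hj; omega
    have hpow : e ^ j ≤ e ^ (ζ - 1) := pow_le_pow_right₀ he1.le hjζ
    have heq : (N.choose j : ℝ) * η ^ j * (1 - η) ^ (N - j)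
        = f j * e ^ j := by
      rw [hf]
      simp only [div_pow]
      field_simp
    rw [heq]
    have hfj := hfnn j
    calc f j * e ^ j ≤ f j * e ^ (ζ - 1) := by
          exact mul_le_mul_of_nonneg_left hpow hfj
      _ = e ^ (ζ - 1) * f j := by ring
  -- Step 2: extend sum
  have step2 : ∑ j ∈ Finset.range ζ, f j ≤ ∑ j ∈ Finset.range (N + 1), f j := by
    have hsub1 : Finset.range ζ ⊆ Finset.range (max ζ (N + 1)) :=
      Finset.range_subset_range.mpr (le_max_left _ _)
    have hsub2 : Finset.range (N + 1) ⊆ Finset.range (max ζ (N + 1)) :=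
      Finset.range_subset_range.mpr (le_max_right _ _)
    have h1 : ∑ j ∈ Finset.range ζ, f j ≤ ∑ j ∈ Finset.range (max ζ (N + 1)), f j :=
      Finset.sum_le_sum_of_subset_of_nonneg hsub1 (fun i _ _ => hfnn i)
    have h2 : ∑ j ∈ Finset.range (N + 1), f j = ∑ j ∈ Finset.range (max ζ (N + 1)), f j := by
      apply Finset.sum_subset hsub2
      intro i _ hi
      have : N < i := by
        simp only [Finset.mem_range, not_lt] at hi; omega
      rw [hf]
      simp [Nat.choose_eq_zero_of_lt this]
    linarith
  -- Step 3: binomial theorem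
  have step3 : ∑ j ∈ Finset.range (N + 1), f j = (η / e + (1 - η)) ^ N := by
    rw [add_pow]
    exact Finset.sum_congr rfl fun j _ => by rw [hf]; ring
  -- Step 4: 1 - x ≤ exp(-x)
  have hbase : η / e + (1 - η) = 1 - η * c := by rw [hc]; ring
  have hbase0 : (0:ℝ) ≤ 1 - η * c := by nlinarith
  have step4 : (η / e + (1 - η)) ^ N ≤ Real.exp (-(η * c) * N) := by
    rw [hbase]
    have hle : 1 - η * c ≤ Real.exp (-(η * c)) := by
      have := Real.add_one_le_exp (-(η * c)); linarith
    calc (1 - η * c) ^ N ≤ Real.exp (-(η * c)) ^ N := pow_le_pow_left₀ hbase0 hle N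
      _ = Real.exp (-(η * c) * N) := by
          rw [← Real.exp_nat_mul]; ring_nf
  -- combine exponentials
  have hζcast : ((ζ - 1 : ℕ) : ℝ) = (ζ : ℝ) - 1 := by
    rw [Nat.cast_sub hζ]; simp
  have hepow : e ^ (ζ - 1) = Real.exp ((ζ : ℝ) - 1) := by
    rw [he, ← Real.exp_nat_mul, ← hζcast]; ring_nf
  -- the exponent inequality from h
  have hexp : (ζ : ℝ) - 1 + (-(η * c) * N) ≤ Real.log (β / M) := by
    have hlog : Real.log (β / M) = -Real.log ((M : ℝ) / β) := by
      rw [Real.log_div hβ0.ne' hM0.ne', Real.log_div hM0.ne' hβ0.ne']; ring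
    rw [hlog]
    have hkey : η * c * (e / (e - 1) * (t / ε)) = 1 := by
      have h1 : e - 1 ≠ 0 := ne_of_gt (by linarith)
      rw [hη, hc]
      field_simp
    have hmul : η * c * (N : ℝ) ≥ η * c *
        (e / (e - 1) * (t / ε) * ((ζ : ℝ) - 1 + Real.log ((M : ℝ) / β))) := by
      apply mul_le_mul_of_nonneg_left h (by positivity)
    have heq2 : η * c * (e / (e - 1) * (t / ε) * ((ζ : ℝ) - 1 + Real.log ((M : ℝ) / β)))
        = (ζ : ℝ) - 1 + Real.log ((M : ℝ) / β) := by
      calc η * c * (e / (e - 1) * (t / ε) * ((ζ : ℝ) - 1 + Real.log ((M : ℝ) / β)))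
          = η * c * (e / (e - 1) * (t / ε)) * ((ζ : ℝ) - 1 + Real.log ((M : ℝ) / β)) := by ring
        _ = (ζ : ℝ) - 1 + Real.log ((M : ℝ) / β) := by rw [hkey]; ring
    rw [heq2] at hmul
    linarith
  -- final combination
  have hS : ∑ j ∈ Finset.range ζ,
      (N.choose j : ℝ) * η ^ j * (1 - η) ^ (N - j) ≤ β / M := by
    calc ∑ j ∈ Finset.range ζ, (N.choose j : ℝ) * η ^ j * (1 - η) ^ (N - j)
        ≤ e ^ (ζ - 1) * ∑ j ∈ Finset.range ζ, f j := step1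
      _ ≤ e ^ (ζ - 1) * ∑ j ∈ Finset.range (N + 1), f j := by
          apply mul_le_mul_of_nonneg_left step2 (by positivity)
      _ = e ^ (ζ - 1) * (η / e + (1 - η)) ^ N := by rw [step3]
      _ ≤ e ^ (ζ - 1) * Real.exp (-(η * c) * N) := by
          apply mul_le_mul_of_nonneg_left step4 (by positivity)
      _ = Real.exp ((ζ : ℝ) - 1 + (-(η * c) * N)) := by
          rw [hepow, ← Real.exp_add]
      _ ≤ Real.exp (Real.log (β / M)) := Real.exp_le_exp.mpr hexp
      _ = β / M := Real.exp_log (div_pos hβ0 hM0)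
  calc (M : ℝ) * ∑ j ∈ Finset.range ζ,
        (N.choose j : ℝ) * η ^ j * (1 - η) ^ (N - j)
      ≤ (M : ℝ) * (β / M) := mul_le_mul_of_nonneg_left hS hM0.le
    _ = β := by field_simp
end
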